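/- Suppose 2 < α < 4. If 0 < Λ₁ ≤ Λ₂, then ∂U₁/∂Λ₁ > 0, where U₁(Λ₁,Λ₂) = Λ₁·log(1 + Λ₁^{−α/2})·exp(−Λ₂/Λ₁ − 1). Consequently, at any Nash equilibrium of the Transformed Random Access Game with strategy spaces [0,N₁]×[0,N₂], at least one network has Λᵢ = Nᵢ. -/

import Mathlib

open Real

lemma key_log (t : ℝ) (ht : 0 < t) : t / (1 + t) < Real.log (1 + t) := by
  have h1 : (0:ℝ) < 1 + t := by linarith
  have hinv : (1 + t)⁻¹ < 1 := by
    rw [inv_lt_one_iff₀]; right; linarith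
  have h := Real.log_lt_sub_one_of_pos (inv_pos.mpr h1) (by linarith : (1+t)⁻¹ ≠ 1)
  rw [Real.log_inv] at h
  have he : t / (1 + t) = 1 - (1 + t)⁻¹ := by field_simp; ring
  linarith

lemma deriv_pos_aux (α Λ₂ Λ₁ : ℝ) (hα : 2 < α) (hα4 : α < 4)
    (h1 : 0 < Λ₁) (h12 : Λ₁ ≤ Λ₂) :
    0 < deriv (fun x : ℝ => x * Real.log (1 + x ^ (-(α / 2))) * Real.exp (-(Λ₂ / x) - 1)) Λ₁ := by
  set p : ℝ := -(α/2) with hp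
  set t : ℝ := Λ₁ ^ p with htdef
  have ht : 0 < t := Real.rpow_pos_of_pos h1 p
  have h1t : 0 < 1 + t := by linarith
  have hrpow : HasDerivAt (fun x : ℝ => x ^ p) (p * Λ₁ ^ (p - 1)) Λ₁ :=
    Real.hasDerivAt_rpow_const (Or.inl h1.ne')
  have harg : HasDerivAt (fun x : ℝ => 1 + x ^ p) (p * Λ₁ ^ (p - 1)) Λ₁ := by
    exact hrpow.const_add 1
  have hlog : HasDerivAt (fun x : ℝ => Real.log (1 + x ^ p))
      ((p * Λ₁ ^ (p - 1)) / (1 + t)) Λ₁ := harg.log h1t.ne'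
  have hinv : HasDerivAt (fun x : ℝ => -(Λ₂ / x) - 1) (-(Λ₂ * -(Λ₁ ^ 2)⁻¹)) Λ₁ := by
    have := ((hasDerivAt_inv h1.ne').const_mul Λ₂).neg.sub_const 1
    simpa [div_eq_mul_inv] using this
  have hexp : HasDerivAt (fun x : ℝ => Real.exp (-(Λ₂ / x) - 1))
      (Real.exp (-(Λ₂ / Λ₁) - 1) * -(Λ₂ * -(Λ₁ ^ 2)⁻¹)) Λ₁ := hinv.exp
  have hmul : HasDerivAt (fun x : ℝ => x * Real.log (1 + x ^ p))
      (1 * Real.log (1 + t) + Λ₁ * ((p * Λ₁ ^ (p - 1)) / (1 + t))) Λ₁ :=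
    (hasDerivAt_id Λ₁).mul hlog
  have hf : HasDerivAt (fun x : ℝ => x * Real.log (1 + x ^ p) * Real.exp (-(Λ₂ / x) - 1))
      ((1 * Real.log (1 + t) + Λ₁ * ((p * Λ₁ ^ (p - 1)) / (1 + t))) * Real.exp (-(Λ₂ / Λ₁) - 1)
        + (Λ₁ * Real.log (1 + t)) * (Real.exp (-(Λ₂ / Λ₁) - 1) * -(Λ₂ * -(Λ₁ ^ 2)⁻¹))) Λ₁ :=
    hmul.mul hexp
  rw [hf.deriv]
  have hApow : Λ₁ * Λ₁ ^ (p - 1) = t := by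
    rw [htdef, mul_comm, ← Real.rpow_add_one h1.ne' (p - 1)]
    congr 1
    ring
  set L := Real.log (1 + t) with hLdef
  have hL : t / (1 + t) < L := key_log t ht
  have hL0 : 0 < L := Real.log_pos (by linarith)
  have hr : 1 ≤ Λ₂ / Λ₁ := (one_le_div h1).mpr h12
  have hE : 0 < Real.exp (-(Λ₂ / Λ₁) - 1) := Real.exp_pos _
  have hkey : 0 < L + p * t / (1 + t) + L * (Λ₂ / Λ₁) := by
    have hs : 0 < t / (1 + t) := div_pos ht h1t
    have h2 : L * 1 ≤ L * (Λ₂ / Λ₁) := mul_le_mul_of_nonneg_left hr hL0.le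
    have h3 : -(α/2) * (t / (1+t)) > -2 * L := by nlinarith
    have h4 : p * t / (1 + t) = -(α/2) * (t / (1+t)) := by rw [hp]; ring
    linarith
  have heq : (1 * L + Λ₁ * ((p * Λ₁ ^ (p - 1)) / (1 + t))) * Real.exp (-(Λ₂ / Λ₁) - 1)
        + (Λ₁ * L) * (Real.exp (-(Λ₂ / Λ₁) - 1) * -(Λ₂ * -(Λ₁ ^ 2)⁻¹))
      = (L + p * t / (1 + t) + L * (Λ₂ / Λ₁)) * Real.exp (-(Λ₂ / Λ₁) - 1) := by
    have hmid : Λ₁ * ((p * Λ₁ ^ (p - 1)) / (1 + t)) = p * t / (1 + t) := by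
      rw [← hApow]; ring
    rw [hmid]
    field_simp
  rw [heq]
  positivity

theorem deriv_pos_and_NE_on_boundary (α N₁ N₂ : ℝ) (hα : 2 < α) (hα4 : α < 4)
    (hN₁ : 0 < N₁) (hN : N₁ ≤ N₂) :
    (∀ Λ₁ Λ₂ : ℝ, 0 < Λ₁ → Λ₁ ≤ Λ₂ →
      0 < deriv (fun x : ℝ => x * Real.log (1 + x ^ (-(α / 2))) * Real.exp (-(Λ₂ / x) - 1)) Λ₁) ∧
    (∀ Λ₁ Λ₂ : ℝ, Λ₁ ∈ Set.Icc 0 N₁ → Λ₂ ∈ Set.Icc 0 N₂ →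
      IsMaxOn (fun x : ℝ => x * Real.log (1 + x ^ (-(α / 2))) * Real.exp (-(Λ₂ / x) - 1))
        (Set.Icc 0 N₁) Λ₁ →
      IsMaxOn (fun y : ℝ => y * Real.log (1 + y ^ (-(α / 2))) * Real.exp (-(Λ₁ / y) - 1))
        (Set.Icc 0 N₂) Λ₂ →
      Λ₁ = N₁ ∨ Λ₂ = N₂) := by
  constructor
  · exact fun Λ₁ Λ₂ h1 h12 => deriv_pos_aux α Λ₂ Λ₁ hα hα4 h1 h12
  · intro Λ₁ Λ₂ hm1 hm2 hmax1 hmax2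
    by_contra hc
    push_neg at hc
    obtain ⟨hc1, hc2⟩ := hc
    have hΛ1lt : Λ₁ < N₁ := lt_of_le_of_ne hm1.2 hc1
    have hΛ2lt : Λ₂ < N₂ := lt_of_le_of_ne hm2.2 hc2
    -- positivity of the value at any positive point
    have hposval : ∀ (c x : ℝ), 0 < x →
        0 < x * Real.log (1 + x ^ (-(α / 2))) * Real.exp (-(c / x) - 1) := by
      intro c x hx
      have := Real.rpow_pos_of_pos hx (-(α/2))
      have hlog := Real.log_pos (by linarith : (1:ℝ) < 1 + x ^ (-(α/2)))
      positivity
    -- Λ₁ > 0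
    have hΛ1pos : 0 < Λ₁ := by
      rcases lt_or_eq_of_le hm1.1 with h | h
      · exact h
      · exfalso
        have h0 := hmax1 (Set.mem_Icc.mpr ⟨le_of_lt hN₁, le_refl N₁⟩)
        have := hposval Λ₂ N₁ hN₁
        simp only [← h, Set.mem_setOf_eq] at h0
        simp at h0
        linarith
    have hΛ2pos : 0 < Λ₂ := by
      rcases lt_or_eq_of_le hm2.1 with h | h
      · exact h
      · exfalso
        have h0 := hmax2 (Set.mem_Icc.mpr ⟨le_of_lt (lt_of_lt_of_le hN₁ hN), le_refl N₂⟩)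
        have := hposval Λ₁ N₂ (lt_of_lt_of_le hN₁ hN)
        simp only [← h, Set.mem_setOf_eq] at h0
        simp at h0
        linarith
    rcases le_total Λ₁ Λ₂ with hle | hle
    · -- derivative positive at Λ₁, but Λ₁ interior max
      have hd := deriv_pos_aux α Λ₂ Λ₁ hα hα4 hΛ1pos hle
      have hloc : IsLocalMax (fun x : ℝ => x * Real.log (1 + x ^ (-(α / 2))) *
          Real.exp (-(Λ₂ / x) - 1)) Λ₁ :=
        hmax1.isLocalMax (Icc_mem_nhds hΛ1pos hΛ1lt)
      have := hloc.deriv_eq_zero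
      rw [this] at hd
      exact lt_irrefl 0 hd
    · have hd := deriv_pos_aux α Λ₁ Λ₂ hα hα4 hΛ2pos hle
      have hloc : IsLocalMax (fun y : ℝ => y * Real.log (1 + y ^ (-(α / 2))) *
          Real.exp (-(Λ₁ / y) - 1)) Λ₂ :=
        hmax2.isLocalMax (Icc_mem_nhds hΛ2pos hΛ2lt)
      have := hloc.deriv_eq_zero
      rw [this] at hd
      exact lt_irrefl 0 hd
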